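/- arXiv:2511.21534 — 2 statements merged into one kernel-verified Lean document; each statement's English description precedes it below -/
import Mathlib

section
/- Bias decomposition for φ₁ (Theorem 1): under consistency, positivity, and weak conditional exchangeability, with γ(a) := Y^(a) − Y^(a,0) (the natural individual spillover effect at A=a), ψ − φ₁ = Σ_{a∈{0,1}} (−1)^{1−a} Cov( Y^(a,0), ε_a ) + Σ_{a∈{0,1}} (−1)^{1−a} Cov( γ(a), ε_a ). (Each covariance equals the paper's product of the corresponding correlation ρ and standard deviations σ.) -/
open MeasureTheory ProbabilityTheory Set

/-- The indicator function of a set, as a real-valued random variable. -/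
noncomputable def ind {Ω : Type*} (s : Set Ω) : Ω → ℝ := s.indicator fun _ => 1

/-- The covariance of two real random variables, `Cov(f,g) = E[f·g] − E[f]·E[g]`. -/
noncomputable def cov {Ω : Type*} {m : MeasurableSpace Ω} (μ : MeasureTheory.Measure Ω)
    (f g : Ω → ℝ) : ℝ :=
  (∫ ω, f ω * g ω ∂μ) - (∫ ω, f ω ∂μ) * ∫ ω, g ω ∂μ

lemma ind_of_mem {Ω : Type*} {s : Set Ω} {ω : Ω} (h : ω ∈ s) : ind s ω = 1 :=
  Set.indicator_of_mem h _

lemma ind_of_not_mem {Ω : Type*} {s : Set Ω} {ω : Ω} (h : ω ∉ s) : ind s ω = 0 :=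
  Set.indicator_of_notMem h _

lemma ind_norm_le {Ω : Type*} (s : Set Ω) (ω : Ω) : ‖ind s ω‖ ≤ 1 := by
  by_cases h : ω ∈ s
  · rw [ind_of_mem h]; simp
  · rw [ind_of_not_mem h]; simp

lemma measurable_ind {Ω : Type*} [MeasurableSpace Ω] {s : Set Ω} (hs : MeasurableSet s) :
    Measurable (ind s) := measurable_const.indicator hs

lemma integrable_ind_mul {Ω : Type*} [MeasurableSpace Ω] {μ : MeasureTheory.Measure Ω} {s : Set Ω}
    (hs : MeasurableSet s) {X : Ω → ℝ} (hX : Integrable X μ) :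
    Integrable (fun ω => ind s ω * X ω) μ :=
  hX.bdd_mul ((measurable_ind hs).aestronglyMeasurable)
    (Filter.Eventually.of_forall fun ω => ind_norm_le s ω)

lemma nat_top_eq_generateFrom_singletons :
    (⊤ : MeasurableSpace ℕ) = .generateFrom (⋃ n : ℕ, {({n} : Set ℕ)}) := by
  refine le_antisymm ?_ le_top
  intro s _
  have hs : s = ⋃ n ∈ s, {n} := (Set.biUnion_of_singleton s).symm
  rw [hs]
  exact MeasurableSet.biUnion (Set.to_countable s)
    (fun n _ => MeasurableSpace.measurableSet_generateFrom (Set.mem_iUnion.2 ⟨n, rfl⟩))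

lemma isPiSystem_nat_singletons : IsPiSystem (⋃ n : ℕ, {({n} : Set ℕ)}) := by
  rintro s hs t ht hne
  obtain ⟨n, hn⟩ := Set.mem_iUnion.1 hs
  obtain ⟨m, hm⟩ := Set.mem_iUnion.1 ht
  simp only [Set.mem_singleton_iff] at hn hm
  subst hn hm
  obtain ⟨x, hx⟩ := hne
  simp only [Set.mem_inter_iff, Set.mem_singleton_iff] at hx
  obtain ⟨rfl, rfl⟩ := hx
  simpa using Set.mem_iUnion.2 ⟨x, rfl⟩

lemma condexp_ind_mul_of_condIndepFun {Ω : Type*} {mF : MeasurableSpace Ω}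
    [mΩ : MeasurableSpace Ω] [StandardBorelSpace Ω] [Nonempty Ω]
    (μ : MeasureTheory.Measure Ω) [IsProbabilityMeasure μ]
    (hF : mF ≤ mΩ)
    {X : Ω → ℝ} {A : Ω → ℕ} (hXm : Measurable X) (hAm : Measurable A)
    (hXint : Integrable X μ) (h : CondIndepFun mF hF X A μ) (a : ℕ) :
    μ[fun ω => ind {ω' | A ω' = a} ω * X ω | mF]
      =ᵐ[μ] fun ω => (μ[ind {ω' | A ω' = a} | mF]) ω * (μ[X | mF]) ω := by
  set κ := condExpKernel (mΩ := mΩ) μ mF with hκ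
  have hsA : MeasurableSet {ω' | A ω' = a} := hAm (measurableSet_singleton a)
  have hker : Kernel.IndepFun X A κ (μ.trim hF) := h
  have key : ∀ᵐ ω ∂μ, ∀ (q : ℚ) (n : ℕ),
      κ ω (X ⁻¹' Iic (q : ℝ) ∩ A ⁻¹' {n}) = κ ω (X ⁻¹' Iic (q : ℝ)) * κ ω (A ⁻¹' {n}) := by
    rw [ae_all_iff]
    intro q
    rw [ae_all_iff]
    intro n
    exact ae_of_ae_trim hF
      (hker.measure_inter_preimage_eq_mul _ _ measurableSet_Iic (measurableSet_singleton n))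
  have hindep : ∀ᵐ ω ∂μ, IndepFun X A (κ ω) := by
    filter_upwards [key] with ω hω
    haveI : IsProbabilityMeasure (κ ω) := IsMarkovKernel.isProbabilityMeasure ω
    have h1 : (MeasurableSpace.comap X (borel ℝ) : MeasurableSpace Ω)
        = .generateFrom {s : Set Ω | ∃ t ∈ (⋃ q : ℚ, {Iic (q : ℝ)}), X ⁻¹' t = s} := by
      rw [Real.borel_eq_generateFrom_Iic_rat, MeasurableSpace.comap_generateFrom]
      rfl
    have h2 : (MeasurableSpace.comap A ⊤ : MeasurableSpace Ω)
        = .generateFrom {s : Set Ω | ∃ t ∈ (⋃ n : ℕ, {({n} : Set ℕ)}), A ⁻¹' t = s} := by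
      rw [nat_top_eq_generateFrom_singletons, MeasurableSpace.comap_generateFrom]
      rfl
    have hps : IndepSets {s : Set Ω | ∃ t ∈ (⋃ q : ℚ, {Iic (q : ℝ)}), X ⁻¹' t = s}
        {s : Set Ω | ∃ t ∈ (⋃ n : ℕ, {({n} : Set ℕ)}), A ⁻¹' t = s} (κ ω) := by
      rintro s t ⟨u, hu, rfl⟩ ⟨v, hv, rfl⟩
      obtain ⟨q, hq⟩ := Set.mem_iUnion.1 hu
      obtain ⟨n, hn⟩ := Set.mem_iUnion.1 hv
      simp only [Set.mem_singleton_iff] at hq hn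
      subst hq hn
      refine Filter.Eventually.of_forall fun _ => ?_
      simpa only [Kernel.const_apply] using hω q n
    exact IndepSets.indep (hXm.comap_le) (hAm.comap_le)
      (Real.isPiSystem_Iic_rat.comap X) (isPiSystem_nat_singletons.comap A) h1 h2 hps
  have hindint : Integrable (ind {ω' | A ω' = a}) μ := (integrable_const (1 : ℝ)).indicator hsA
  have hprodint : Integrable (fun ω => ind {ω' | A ω' = a} ω * X ω) μ :=
    integrable_ind_mul hsA hXint
  have hXker := hXint.condExpKernel_ae (m := mF)
  have h1 := condExp_ae_eq_integral_condExpKernel hF hprodint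
  have h2 := condExp_ae_eq_integral_condExpKernel hF hindint
  have h3 := condExp_ae_eq_integral_condExpKernel hF hXint
  have hmul : ∀ᵐ ω ∂μ, ∫ y, ind {ω' | A ω' = a} y * X y ∂(κ ω)
      = (∫ y, ind {ω' | A ω' = a} y ∂(κ ω)) * ∫ y, X y ∂(κ ω) := by
    filter_upwards [hindep, hXker] with ω hω hXω
    haveI : IsProbabilityMeasure (κ ω) := IsMarkovKernel.isProbabilityMeasure ω
    have hφ : Measurable (fun n : ℕ => if n = a then (1 : ℝ) else 0) := measurable_from_top
    have hcomp : (fun n : ℕ => if n = a then (1 : ℝ) else 0) ∘ A = ind {ω' | A ω' = a} := by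
      funext ω'
      by_cases h : A ω' = a
      · simp [Function.comp, h, ind_of_mem (show ω' ∈ {ω' | A ω' = a} from h)]
      · simp [Function.comp, h, ind_of_not_mem (show ω' ∉ {ω' | A ω' = a} from h)]
    have hIF : IndepFun (ind {ω' | A ω' = a}) X (κ ω) := by
      have := (hω.symm.comp hφ measurable_id)
      rwa [hcomp] at this
    have hindω : Integrable (ind {ω' | A ω' = a}) (κ ω) := (integrable_const (1 : ℝ)).indicator hsA
    have := IndepFun.integral_mul_eq_mul_integral hIF hindω.aestronglyMeasurable hXω.aestronglyMeasurable
    simpa [Pi.mul_def] using this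
  refine h1.trans ?_
  filter_upwards [hmul, h2, h3] with ω hm h2ω h3ω
  rw [hm, h2ω, h3ω]

set_option maxHeartbeats 1000000 in
lemma bias_decomposition_phi1_aux
    {Ω : Type*} {mG mF : MeasurableSpace Ω}
    [mΩ : MeasurableSpace Ω] [StandardBorelSpace Ω] [Nonempty Ω]
    (μ : MeasureTheory.Measure Ω) [IsProbabilityMeasure μ]
    (gmax : ℕ)
    (A G : Ω → ℕ) (hA : ∀ ω, A ω ≤ 1) (hG : ∀ ω, G ω ≤ gmax)
    (hAmeas : Measurable A) (hGmeas : Measurable G)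
    (Ypo : ℕ → ℕ → Ω → ℝ)
    (hYpomeas : ∀ a ≤ 1, ∀ g ≤ gmax, Measurable (Ypo a g))
    (hYposq : ∀ a ≤ 1, ∀ g ≤ gmax, MemLp (Ypo a g) 2 μ)
    (Ya : ℕ → Ω → ℝ)
    (hYa : ∀ a ω, Ya a ω = ∑ g ∈ Finset.range (gmax + 1), ind {ω' | G ω' = g} ω * Ypo a g ω)
    (Y : Ω → ℝ)
    (hY : ∀ ω, Y ω = ind {ω' | A ω' = 1} ω * Ya 1 ω + ind {ω' | A ω' = 0} ω * Ya 0 ω)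
    (hGF : mG ≤ mF) (hF : mF ≤ mΩ)
    (π e ε : ℕ → Ω → ℝ)
    (hπ : ∀ a, π a = μ[ind {ω | A ω = a} | mF])
    (he : ∀ a, e a = μ[ind {ω | A ω = a} | mG])
    (hπpos : ∀ a ≤ 1, ∀ᵐ ω ∂μ, 0 < π a ω)
    (hepos : ∀ a ≤ 1, ∀ᵐ ω ∂μ, 0 < e a ω)
    (hexch : ∀ a ≤ 1, CondIndepFun mF hF (Ya a) A μ)
    (hε : ∀ a ω, ε a ω = π a ω / e a ω)
    (hεint : ∀ a ≤ 1, Integrable (ε a) μ)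
    (hεYint : ∀ a ≤ 1, Integrable (fun ω => Ya a ω * ε a ω) μ)
    (hεY0int : ∀ a ≤ 1, Integrable (fun ω => Ypo a 0 ω * ε a ω) μ)
    (hwint : ∀ a ≤ 1, Integrable (fun ω => ind {ω' | A ω' = a} ω * Y ω / e a ω) μ) :
    ((∫ ω, ind {ω' | A ω' = 1} ω * Y ω / e 1 ω ∂μ)
        - ∫ ω, ind {ω' | A ω' = 0} ω * Y ω / e 0 ω ∂μ)
      - ∫ ω, (Ya 1 ω - Ya 0 ω) ∂μ
    = (∑ a ∈ Finset.range 2, (-1 : ℝ) ^ (1 - a) * cov μ (Ypo a 0) (ε a))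
      + ∑ a ∈ Finset.range 2,
          (-1 : ℝ) ^ (1 - a) * cov μ (fun ω => Ya a ω - Ypo a 0 ω) (ε a) := by
  have hmG : mG ≤ mΩ := hGF.trans hF
  have hYpoint : ∀ a ≤ 1, ∀ g ≤ gmax, Integrable (Ypo a g) μ :=
    fun a ha g hg => (hYposq a ha g hg).integrable one_le_two
  have hGset : ∀ g : ℕ, MeasurableSet {ω' | G ω' = g} :=
    fun g => hGmeas (measurableSet_singleton g)
  have hAset : ∀ a : ℕ, MeasurableSet {ω' | A ω' = a} :=
    fun a => hAmeas (measurableSet_singleton a)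
  have hYam : ∀ a, a ≤ 1 → Measurable (Ya a) := by
    intro a ha
    have hfn : Ya a = fun ω => ∑ g ∈ Finset.range (gmax + 1), ind {ω' | G ω' = g} ω * Ypo a g ω :=
      funext (hYa a)
    rw [hfn]
    exact Finset.measurable_sum _ fun g hg =>
      (measurable_ind (hGset g)).mul (hYpomeas a ha g (Nat.lt_succ_iff.1 (Finset.mem_range.1 hg)))
  have hYaint : ∀ a, a ≤ 1 → Integrable (Ya a) μ := by
    intro a ha
    have hfn : Ya a = fun ω => ∑ g ∈ Finset.range (gmax + 1), ind {ω' | G ω' = g} ω * Ypo a g ω :=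
      funext (hYa a)
    rw [hfn]
    exact integrable_finset_sum _ fun g hg =>
      integrable_ind_mul (hGset g) (hYpoint a ha g (Nat.lt_succ_iff.1 (Finset.mem_range.1 hg)))
  have heSM : ∀ a, StronglyMeasurable[mG] (e a) := fun a => he a ▸ stronglyMeasurable_condExp
  have hπSM : ∀ a, StronglyMeasurable[mF] (π a) := fun a => hπ a ▸ stronglyMeasurable_condExp
  have hπint : ∀ a, Integrable (π a) μ := fun a => hπ a ▸ integrable_condExp
  have heinvSM : ∀ a, StronglyMeasurable[mG] (fun ω => (e a ω)⁻¹) :=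
    fun a => ((heSM a).measurable.inv).stronglyMeasurable
  -- Step 1 : the MEW score has mean one
  have hεone : ∀ a, a ≤ 1 → ∫ ω, ε a ω ∂μ = 1 := by
    intro a ha
    have hfun : ((fun ω => (e a ω)⁻¹) * π a) = ε a := by
      funext ω
      simp only [Pi.mul_apply]
      rw [hε, div_eq_mul_inv, mul_comm]
    have hfg : Integrable ((fun ω => (e a ω)⁻¹) * π a) μ := by
      rw [hfun]; exact hεint a ha
    have hmul := condExp_mul_of_stronglyMeasurable_left (heinvSM a) hfg (hπint a)
    have hππ : μ[π a | mG] =ᵐ[μ] e a := by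
      rw [hπ a, he a]; exact condExp_condExp_of_le hGF hF
    have h1 : μ[ε a | mG] =ᵐ[μ] fun _ => (1 : ℝ) := by
      rw [← hfun]
      refine hmul.trans ?_
      filter_upwards [hππ, hepos a ha] with ω h1 h2
      simp only [Pi.mul_apply]
      rw [h1, inv_mul_cancel₀ (ne_of_gt h2)]
    calc ∫ ω, ε a ω ∂μ = ∫ ω, (μ[ε a | mG]) ω ∂μ := (integral_condExp hmG).symm
      _ = ∫ _ω, (1 : ℝ) ∂μ := integral_congr_ae h1
      _ = 1 := by simp
  -- Step 2 : the naive-weighted mean equals the ε-weighted mean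
  have hB : ∀ a, a ≤ 1 →
      (∫ ω, ind {ω' | A ω' = a} ω * Y ω / e a ω ∂μ) = ∫ ω, Ya a ω * ε a ω ∂μ := by
    intro a ha
    have hpt : ∀ ω, ind {ω' | A ω' = a} ω * Y ω = ind {ω' | A ω' = a} ω * Ya a ω := by
      intro ω
      by_cases h : A ω = a
      · have h1 : Y ω = Ya a ω := by
          rw [hY ω]
          interval_cases a
          · rw [ind_of_mem (show ω ∈ {ω' | A ω' = 0} from h),
              ind_of_not_mem (show ω ∉ {ω' | A ω' = 1} from by simp [Set.mem_setOf_eq, h])]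
            ring
          · rw [ind_of_mem (show ω ∈ {ω' | A ω' = 1} from h),
              ind_of_not_mem (show ω ∉ {ω' | A ω' = 0} from by simp [Set.mem_setOf_eq, h])]
            ring
        rw [h1]
      · rw [ind_of_not_mem (show ω ∉ {ω' | A ω' = a} from h)]
        ring
    have hdiveq : (fun ω => ind {ω' | A ω' = a} ω * Y ω / e a ω)
        = (fun ω => (e a ω)⁻¹) * fun ω => ind {ω' | A ω' = a} ω * Ya a ω := by
      funext ω
      simp only [Pi.mul_apply]
      rw [hpt ω, div_eq_mul_inv, mul_comm]
    have hindYa : Integrable (fun ω => ind {ω' | A ω' = a} ω * Ya a ω) μ :=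
      integrable_ind_mul (hAset a) (hYaint a ha)
    have hwint' : Integrable ((fun ω => (e a ω)⁻¹) * fun ω => ind {ω' | A ω' = a} ω * Ya a ω) μ := by
      rw [← hdiveq]; exact hwint a ha
    have heinvF : StronglyMeasurable[mF] (fun ω => (e a ω)⁻¹) := (heinvSM a).mono hGF
    have hpull1 := condExp_mul_of_stronglyMeasurable_left heinvF hwint' hindYa
    have hcrux := condexp_ind_mul_of_condIndepFun (mΩ := mΩ) μ hF (hYam a ha) hAmeas
      (hYaint a ha) (hexch a ha) a
    have hwSM : StronglyMeasurable[mF] (fun ω => (e a ω)⁻¹ * π a ω) := heinvF.mul (hπSM a)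
    have hwYa : ((fun ω => (e a ω)⁻¹ * π a ω) * Ya a) = fun ω => Ya a ω * ε a ω := by
      funext ω
      simp only [Pi.mul_apply]
      rw [hε, div_eq_mul_inv]
      ring
    have hwYaint : Integrable ((fun ω => (e a ω)⁻¹ * π a ω) * Ya a) μ := by
      rw [hwYa]; exact hεYint a ha
    have hpull2 := condExp_mul_of_stronglyMeasurable_left hwSM hwYaint (hYaint a ha)
    have hchain : μ[(fun ω => (e a ω)⁻¹) * fun ω => ind {ω' | A ω' = a} ω * Ya a ω | mF]
        =ᵐ[μ] μ[(fun ω => (e a ω)⁻¹ * π a ω) * Ya a | mF] := by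
      refine hpull1.trans (Filter.EventuallyEq.trans ?_ hpull2.symm)
      filter_upwards [hcrux] with ω hω
      simp only [Pi.mul_apply]
      rw [hω, hπ a]
      ring
    calc ∫ ω, ind {ω' | A ω' = a} ω * Y ω / e a ω ∂μ
        = ∫ ω, ((fun ω => (e a ω)⁻¹) * fun ω => ind {ω' | A ω' = a} ω * Ya a ω) ω ∂μ := by
          rw [hdiveq]
      _ = ∫ ω, (μ[(fun ω => (e a ω)⁻¹) * fun ω => ind {ω' | A ω' = a} ω * Ya a ω | mF]) ω ∂μ :=
          (integral_condExp hF).symm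
      _ = ∫ ω, (μ[(fun ω => (e a ω)⁻¹ * π a ω) * Ya a | mF]) ω ∂μ := integral_congr_ae hchain
      _ = ∫ ω, ((fun ω => (e a ω)⁻¹ * π a ω) * Ya a) ω ∂μ := integral_condExp hF
      _ = ∫ ω, Ya a ω * ε a ω ∂μ := by rw [hwYa]
  -- Step 3 : covariance algebra
  have hYpo0int : ∀ a, a ≤ 1 → Integrable (Ypo a 0) μ := fun a ha => hYpoint a ha 0 (Nat.zero_le _)
  have hcovsum : ∀ a, a ≤ 1 → cov μ (Ypo a 0) (ε a) + cov μ (fun ω => Ya a ω - Ypo a 0 ω) (ε a)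
      = (∫ ω, Ya a ω * ε a ω ∂μ) - ∫ ω, Ya a ω ∂μ := by
    intro a ha
    have hsubmul : (fun ω => (Ya a ω - Ypo a 0 ω) * ε a ω)
        = fun ω => Ya a ω * ε a ω - Ypo a 0 ω * ε a ω := by
      funext ω; ring
    have hint1 : ∫ ω, (Ya a ω - Ypo a 0 ω) * ε a ω ∂μ
        = (∫ ω, Ya a ω * ε a ω ∂μ) - ∫ ω, Ypo a 0 ω * ε a ω ∂μ := by
      rw [hsubmul]
      exact integral_sub (hεYint a ha) (hεY0int a ha)
    have hint2 : ∫ ω, (Ya a ω - Ypo a 0 ω) ∂μ = (∫ ω, Ya a ω ∂μ) - ∫ ω, Ypo a 0 ω ∂μ :=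
      integral_sub (hYaint a ha) (hYpo0int a ha)
    simp only [cov]
    rw [hint1, hint2, hεone a ha]
    ring
  have hIsub : ∫ ω, (Ya 1 ω - Ya 0 ω) ∂μ = (∫ ω, Ya 1 ω ∂μ) - ∫ ω, Ya 0 ω ∂μ :=
    integral_sub (hYaint 1 le_rfl) (hYaint 0 (Nat.zero_le _))
  rw [hB 1 le_rfl, hB 0 (Nat.zero_le _), hIsub]
  have e0 := hcovsum 0 (Nat.zero_le _)
  have e1 := hcovsum 1 le_rfl
  simp only [Finset.sum_range_succ, Finset.sum_range_zero, zero_add, Nat.sub_zero, Nat.sub_self,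
    pow_one, pow_zero, one_mul, neg_one_mul]
  linarith [e0, e1]

/-- **Bias decomposition for φ₁ (Theorem 1).**  In the reference population, under
consistency, positivity, and weak conditional exchangeability, with
`γ(a) = Y^(a) − Y^(a,0)` the natural individual spillover effect at `A = a`,
`ψ − φ₁ = Σ_{a∈{0,1}} (−1)^{1−a} Cov(Y^(a,0), ε_a) + Σ_{a∈{0,1}} (−1)^{1−a} Cov(γ(a), ε_a)`,
where `ε_a = π_a / e_a` is the MEW score, `ψ = E[1{A=1}Y/e₁] − E[1{A=0}Y/e₀]` the naive
functional and `φ₁ = E[Y^(1) − Y^(0)]` the natural average main effect. -/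
theorem bias_decomposition_phi1
    {Ω : Type*} [mΩ : MeasurableSpace Ω] [StandardBorelSpace Ω] [Nonempty Ω]
    (μ : Measure Ω) [IsProbabilityMeasure μ]
    (gmax : ℕ)
    (A G : Ω → ℕ) (hA : ∀ ω, A ω ≤ 1) (hG : ∀ ω, G ω ≤ gmax)
    (hAmeas : Measurable A) (hGmeas : Measurable G)
    (Ypo : ℕ → ℕ → Ω → ℝ)
    (hYpomeas : ∀ a ≤ 1, ∀ g ≤ gmax, Measurable (Ypo a g))
    (hYposq : ∀ a ≤ 1, ∀ g ≤ gmax, MemLp (Ypo a g) 2 μ)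
    (Ya : ℕ → Ω → ℝ)
    (hYa : ∀ a ω, Ya a ω = ∑ g ∈ Finset.range (gmax + 1), ind {ω' | G ω' = g} ω * Ypo a g ω)
    (Y : Ω → ℝ)
    (hY : ∀ ω, Y ω = ind {ω' | A ω' = 1} ω * Ya 1 ω + ind {ω' | A ω' = 0} ω * Ya 0 ω)
    (mG mF : MeasurableSpace Ω) (hGF : mG ≤ mF) (hF : mF ≤ mΩ)
    (π e ε : ℕ → Ω → ℝ)
    (hπ : ∀ a, π a = μ[ind {ω | A ω = a} | mF])
    (he : ∀ a, e a = μ[ind {ω | A ω = a} | mG])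
    (hπpos : ∀ a ≤ 1, ∀ᵐ ω ∂μ, 0 < π a ω)
    (hepos : ∀ a ≤ 1, ∀ᵐ ω ∂μ, 0 < e a ω)
    (hexch : ∀ a ≤ 1, CondIndepFun mF hF (Ya a) A μ)
    (hε : ∀ a ω, ε a ω = π a ω / e a ω)
    (hεint : ∀ a ≤ 1, Integrable (ε a) μ)
    (hεYint : ∀ a ≤ 1, Integrable (fun ω => Ya a ω * ε a ω) μ)
    (hεY0int : ∀ a ≤ 1, Integrable (fun ω => Ypo a 0 ω * ε a ω) μ)
    (hwint : ∀ a ≤ 1, Integrable (fun ω => ind {ω' | A ω' = a} ω * Y ω / e a ω) μ) :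
    ((∫ ω, ind {ω' | A ω' = 1} ω * Y ω / e 1 ω ∂μ)
        - ∫ ω, ind {ω' | A ω' = 0} ω * Y ω / e 0 ω ∂μ)
      - ∫ ω, (Ya 1 ω - Ya 0 ω) ∂μ
    = (∑ a ∈ Finset.range 2, (-1 : ℝ) ^ (1 - a) * cov μ (Ypo a 0) (ε a))
      + ∑ a ∈ Finset.range 2,
          (-1 : ℝ) ^ (1 - a) * cov μ (fun ω => Ya a ω - Ypo a 0 ω) (ε a) :=
  bias_decomposition_phi1_aux (mΩ := mΩ) μ gmax A G hA hG hAmeas hGmeas Ypo hYpomeas hYposq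
    Ya hYa Y hY hGF hF π e ε hπ he hπpos hepos hexch hε hεint hεYint hεY0int hwint
end

section
/- Bias decomposition for φ₂ (Theorem 2): ψ − φ₂ = (ψ − φ₁) + T₃, where T₃ := Σ_{g=0}^{g_max} [ Cov( τ(g), υ(g) ) + E[τ(g)] · ( P(G=g|S=1) − P(G=g|S=2) ) ], υ(g) := P(G=g|S=1,𝓗) − P(G=g|S=2,𝓗), and the covariance and expectation in T₃ are taken unconditionally (over both populations). In particular φ₁ − φ₂ = T₃. -/
open MeasureTheory ProbabilityTheory Set
open scoped ENNReal

section Aux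

variable {Ω : Type*} {mΩ : MeasurableSpace Ω} {μ : Measure Ω}

lemma ind_nonneg {s : Set Ω} (ω : Ω) : 0 ≤ ind s ω := by
  simp only [ind, Set.indicator]; split_ifs <;> norm_num

lemma ind_le_one {s : Set Ω} (ω : Ω) : ind s ω ≤ 1 := by
  simp only [ind, Set.indicator]; split_ifs <;> norm_num

lemma norm_ind_le_one {s : Set Ω} (ω : Ω) : ‖ind s ω‖ ≤ 1 := by
  rw [Real.norm_eq_abs, abs_le]; exact ⟨by linarith [ind_nonneg (s := s) ω], ind_le_one ω⟩

lemma ind_stronglyMeasurable {s : Set Ω} (hs : MeasurableSet s) :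
    StronglyMeasurable (ind s) := stronglyMeasurable_const.indicator hs

lemma integrable_ind [IsFiniteMeasure μ] {s : Set Ω} (hs : MeasurableSet s) :
    Integrable (ind s) μ := (integrable_const (1 : ℝ)).indicator hs

lemma integral_ind {B : Set Ω} (hB : MeasurableSet B) :
    ∫ ω, ind B ω ∂μ = (μ B).toReal := by
  rw [ind, integral_indicator_const _ hB, smul_eq_mul, mul_one]; rfl

lemma setIntegral_ind {B : Set Ω} (hB : MeasurableSet B) (C : Set Ω) :
    ∫ ω in C, ind B ω ∂μ = (μ (B ∩ C)).toReal := by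
  rw [integral_ind hB, Measure.restrict_apply hB]

lemma integral_cmul (μ : Measure Ω) (c : ℝ) (f : Ω → ℝ) :
    ∫ ω, c * f ω ∂μ = c * ∫ ω, f ω ∂μ := integral_const_mul c f

lemma setIntegral_eq_integral_indicator (μ : Measure Ω) {C : Set Ω}
    (hC : MeasurableSet[mΩ] C) (f : Ω → ℝ) :
    ∫ ω in C, f ω ∂μ = ∫ ω, C.indicator f ω ∂μ := (integral_indicator hC).symm

lemma MeasureTheory.Integrable.cond' {f : Ω → ℝ} {t : Set Ω} (hf : Integrable f μ) (ht : μ t ≠ 0) :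
    Integrable f (μ[|t]) := by
  rw [ProbabilityTheory.cond]
  exact (hf.restrict).smul_measure (ENNReal.inv_ne_top.mpr ht)

lemma integral_cond {f : Ω → ℝ} {t : Set Ω} :
    ∫ ω, f ω ∂(μ[|t]) = (μ t).toReal⁻¹ * ∫ ω in t, f ω ∂μ := by
  rw [ProbabilityTheory.cond, integral_smul_measure, ENNReal.toReal_inv, smul_eq_mul]

lemma cond_trim_eq {mH : MeasurableSpace Ω} (hH : mH ≤ mΩ) {t : Set Ω}
    (ht : MeasurableSet[mΩ] t) (ht0 : μ t ≠ 0) (htne : μ t ≠ ∞)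
    (hind : ∀ B, MeasurableSet[mH] B → μ (t ∩ B) = μ t * μ B) :
    (μ[|t]).trim hH = μ.trim hH := by
  refine Measure.ext fun B hB => ?_
  rw [trim_measurableSet_eq hH hB, trim_measurableSet_eq hH hB, cond_apply (m := mΩ) ht μ, hind B (by exact hB),
    ← mul_assoc, ENNReal.inv_mul_cancel ht0 htne, one_mul]

lemma integral_cond_of_stronglyMeasurable {mH : MeasurableSpace Ω} (hH : mH ≤ mΩ) {t : Set Ω}
    (ht : MeasurableSet[mΩ] t) (ht0 : μ t ≠ 0) (htne : μ t ≠ ∞)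
    (hind : ∀ B, MeasurableSet[mH] B → μ (t ∩ B) = μ t * μ B)
    {f : Ω → ℝ} (hf : StronglyMeasurable[mH] f) :
    ∫ ω, f ω ∂(μ[|t]) = ∫ ω, f ω ∂μ := by
  rw [integral_trim hH hf, integral_trim hH hf (μ := μ), cond_trim_eq hH ht ht0 htne hind]

end Aux

section Key

variable {Ω : Type*} {mΩ : MeasurableSpace Ω} {μ : Measure Ω} [IsFiniteMeasure μ]

lemma integral_mul_ind_eq_integral_mul_condexp
    {mH : MeasurableSpace Ω} (hH : mH ≤ mΩ)
    {m₁ : MeasurableSpace Ω} (hm₁ : m₁ ≤ mΩ)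
    {B : Set Ω} (hB : MeasurableSet[mΩ] B)
    (hmul : ∀ C : Set Ω, MeasurableSet[m₁] C →
      (μ[ind (C ∩ B)|mH]) =ᵐ[μ] fun ω => (μ[ind C|mH]) ω * (μ[ind B|mH]) ω)
    {X : Ω → ℝ} (hX : Integrable X μ) (hXm : StronglyMeasurable[m₁] X) :
    ∫ ω, X ω * ind B ω ∂μ = ∫ ω, X ω * (μ[ind B|mH]) ω ∂μ := by
  set p : Ω → ℝ := μ[ind B|mH] with hpdef
  have hp_meas : StronglyMeasurable[mH] p := stronglyMeasurable_condExp
  have hp_int : Integrable p μ := integrable_condExp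
  have hp_bdd : ∀ᵐ ω ∂μ, ‖p ω‖ ≤ 1 := by
    have h0 : 0 ≤ᵐ[μ] p := condExp_nonneg (Filter.Eventually.of_forall ind_nonneg)
    have h1 : p ≤ᵐ[μ] μ[(fun _ : Ω => (1:ℝ))|mH] :=
      condExp_mono (integrable_ind hB) (integrable_const 1)
        (Filter.Eventually.of_forall ind_le_one)
    rw [condExp_const hH (1:ℝ)] at h1
    filter_upwards [h0, h1] with ω hω0 hω1
    rw [Real.norm_eq_abs, abs_le]
    have hω0' : (0:ℝ) ≤ p ω := hω0
    exact ⟨by linarith, hω1⟩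
  have hindm : AEStronglyMeasurable[mΩ] (ind B) μ := (ind_stronglyMeasurable hB).aestronglyMeasurable
  have hpm : AEStronglyMeasurable[mΩ] p μ := (hp_meas.mono hH).aestronglyMeasurable
  have main : ∀ ⦃f : Ω → ℝ⦄, MemLp f 1 μ → AEStronglyMeasurable[m₁] f μ →
      ∫ ω, f ω * ind B ω ∂μ = ∫ ω, f ω * p ω ∂μ := by
    refine MemLp.induction_stronglyMeasurable hm₁ ENNReal.one_ne_top
      (fun f => ∫ ω, f ω * ind B ω ∂μ = ∫ ω, f ω * p ω ∂μ) ?_ ?_ ?_ ?_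
    · intro c s hs _
      have hsΩ : MeasurableSet[mΩ] s := hm₁ s hs
      have hLHS : ∀ ω, (s.indicator (fun _ => c)) ω * ind B ω
          = c * ind (s ∩ B) ω := by
        intro ω
        by_cases h1 : ω ∈ s <;> by_cases h2 : ω ∈ B <;>
          simp [Set.indicator, ind, h1, h2, Set.mem_inter_iff]
      have hRHS : ∀ ω, (s.indicator (fun _ => c)) ω * p ω = c * (ind s ω * p ω) := by
        intro ω; by_cases h1 : ω ∈ s <;> simp [Set.indicator, ind, h1]
      simp_rw [hLHS, hRHS]
      rw [integral_const_mul, integral_const_mul, integral_ind (hsΩ.inter hB)]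
      have hc1 : ∫ ω, ind s ω * p ω ∂μ = ∫ ω, (μ[(fun ω => p ω * ind s ω)|mH]) ω ∂μ := by
        rw [integral_condExp hH]
        exact integral_congr_ae (Filter.Eventually.of_forall fun ω => (mul_comm _ _))
      have hmul' := condExp_stronglyMeasurable_mul_of_bound hH hp_meas (integrable_ind hsΩ) 1 hp_bdd
      have hc2 : ∫ ω, (μ[(fun ω => p ω * ind s ω)|mH]) ω ∂μ = ∫ ω, (μ[ind s|mH]) ω * p ω ∂μ := by
        refine integral_congr_ae (hmul'.mono fun ω h => ?_)
        exact h.trans (mul_comm _ _)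
      have hc3 : ∫ ω, (μ[ind s|mH]) ω * p ω ∂μ = ∫ ω, (μ[ind (s ∩ B)|mH]) ω ∂μ :=
        (integral_congr_ae (hmul s hs)).symm
      rw [hc1, hc2, hc3, integral_condExp hH, integral_ind (hsΩ.inter hB)]
    · intro f g _ hf hg _ _ hPf hPg
      have hfi := memLp_one_iff_integrable.mp hf
      have hgi := memLp_one_iff_integrable.mp hg
      simp only [Pi.add_apply, add_mul]
      rw [integral_add (hfi.mul_bdd hindm (Filter.Eventually.of_forall norm_ind_le_one))
            (hgi.mul_bdd hindm (Filter.Eventually.of_forall norm_ind_le_one)),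
          integral_add (hfi.mul_bdd hpm hp_bdd) (hgi.mul_bdd hpm hp_bdd), hPf, hPg]
    · have hcont : ∀ (w : Ω → ℝ), AEStronglyMeasurable[mΩ] w μ → (∀ᵐ ω ∂μ, ‖w ω‖ ≤ 1) →
          Continuous fun f : Lp ℝ 1 μ => ∫ ω, f ω * w ω ∂μ := by
        intro w hwm hwb
        refine (LipschitzWith.of_dist_le_mul (K := 1) fun f g => ?_).continuous
        have hfi : Integrable (f : Ω → ℝ) μ := L1.integrable_coeFn f
        have hgi : Integrable (g : Ω → ℝ) μ := L1.integrable_coeFn g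
        rw [Real.dist_eq, NNReal.coe_one, one_mul]
        have hsub : ∫ ω, f ω * w ω ∂μ - ∫ ω, g ω * w ω ∂μ = ∫ ω, (f ω - g ω) * w ω ∂μ := by
          rw [← integral_sub (hfi.mul_bdd hwm hwb) (hgi.mul_bdd hwm hwb)]
          simp_rw [sub_mul]
        rw [hsub]
        have h1 : |∫ ω, (f ω - g ω) * w ω ∂μ| ≤ ∫ ω, ‖(f ω - g ω) * w ω‖ ∂μ := by
          rw [← Real.norm_eq_abs]; exact norm_integral_le_integral_norm _
        have h2 : ∫ ω, ‖(f ω - g ω) * w ω‖ ∂μ ≤ ∫ ω, ‖f ω - g ω‖ ∂μ := by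
          refine integral_mono_ae ((hfi.sub hgi).mul_bdd hwm hwb).norm (hfi.sub hgi).norm ?_
          filter_upwards [hwb] with ω hw
          rw [norm_mul]
          calc ‖f ω - g ω‖ * ‖w ω‖ ≤ ‖f ω - g ω‖ * 1 :=
                mul_le_mul_of_nonneg_left hw (norm_nonneg _)
            _ = ‖f ω - g ω‖ := mul_one _
        have h3 : dist f g = ∫ ω, ‖f ω - g ω‖ ∂μ := by
          rw [dist_eq_norm, L1.norm_eq_integral_norm]
          exact integral_congr_ae ((Lp.coeFn_sub f g).mono fun ω h => by dsimp only; rw [h]; rfl)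
        rw [h3]
        exact h1.trans h2
      refine isClosed_eq ?_ ?_
      · exact (hcont (ind B) hindm (Filter.Eventually.of_forall norm_ind_le_one)).comp
          (ContinuousLinearMap.continuous (Submodule.subtypeL _))
      · exact (hcont p hpm hp_bdd).comp (ContinuousLinearMap.continuous (Submodule.subtypeL _))
    · intro f g hfg _ hPf
      have e1 : ∫ ω, f ω * ind B ω ∂μ = ∫ ω, g ω * ind B ω ∂μ :=
        integral_congr_ae (hfg.mono fun ω h => by dsimp only; rw [h])
      have e2 : ∫ ω, f ω * p ω ∂μ = ∫ ω, g ω * p ω ∂μ :=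
        integral_congr_ae (hfg.mono fun ω h => by dsimp only; rw [h])
      rw [← e1, ← e2]; exact hPf
  exact main (memLp_one_iff_integrable.mpr hX) hXm.aestronglyMeasurable

end Key

/-- **Bias decomposition for φ₂ (Theorem 2).**  Under the reference-population assumptions
(consistency, positivity, weak conditional exchangeability under `P(·|S=1)`) and the
transportability assumptions, `ψ − φ₂ = (ψ − φ₁) + T₃` where
`T₃ = Σ_g [Cov(τ(g), υ(g)) + E[τ(g)]·(P(G=g|S=1) − P(G=g|S=2))]`,
`τ(g) = Y^(1,g) − Y^(0,g)`, `υ(g) = P(G=g|S=1,𝓗) − P(G=g|S=2,𝓗)`, and the covariance and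
expectation in `T₃` are unconditional.  In particular `φ₁ − φ₂ = T₃`. -/
theorem bias_decomposition_phi2
    {Ω : Type*} [mΩ : MeasurableSpace Ω] [StandardBorelSpace Ω] [Nonempty Ω]
    (μ : Measure Ω) [IsProbabilityMeasure μ]
    (gmax : ℕ)
    (S A G : Ω → ℕ)
    (hS : ∀ ω, S ω = 1 ∨ S ω = 2) (hSmeas : Measurable S)
    (hSpos : ∀ s, (s = 1 ∨ s = 2) → 0 < μ {ω | S ω = s})
    (hA : ∀ ω, A ω ≤ 1) (hG : ∀ ω, G ω ≤ gmax)
    (hAmeas : Measurable A) (hGmeas : Measurable G)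
    (Ypo : ℕ → ℕ → Ω → ℝ)
    (hYpomeas : ∀ a ≤ 1, ∀ g ≤ gmax, Measurable (Ypo a g))
    (hYposq : ∀ a ≤ 1, ∀ g ≤ gmax, MemLp (Ypo a g) 2 μ)
    (Ya : ℕ → Ω → ℝ)
    (hYa : ∀ a ω, Ya a ω = ∑ g ∈ Finset.range (gmax + 1), ind {ω' | G ω' = g} ω * Ypo a g ω)
    (Y : Ω → ℝ)
    (hY : ∀ ω, Y ω = ind {ω' | A ω' = 1} ω * Ya 1 ω + ind {ω' | A ω' = 0} ω * Ya 0 ω)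
    -- transportability assumptions
    (mH : MeasurableSpace Ω) (hH : mH ≤ mΩ)
    (pg : ℕ → ℕ → Ω → ℝ)
    (hpg : ∀ s g, pg s g = (μ[|{ω | S ω = s}])[ind {ω | G ω = g} | mH])
    (hpgbdd : ∀ s g, ∀ᵐ ω ∂μ, 0 ≤ pg s g ω ∧ pg s g ω ≤ 1)
    (hpgmeas : ∀ s g, Measurable[mH] (pg s g))
    (htrans : ∀ a ≤ 1, ∀ g ≤ gmax,
      CondIndepFun mH hH (Ypo a g) (fun ω => (S ω, G ω)) μ)
    (hSH : Indep (MeasurableSpace.comap S inferInstance) mH μ)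
    -- reference-population assumptions, under P₁ = μ[|{S=1}]
    (mG mF : MeasurableSpace Ω) (hGF : mG ≤ mF) (hF : mF ≤ mΩ)
    (π e ε : ℕ → Ω → ℝ)
    (hπ : ∀ a, π a = (μ[|{ω | S ω = 1}])[ind {ω | A ω = a} | mF])
    (he : ∀ a, e a = (μ[|{ω | S ω = 1}])[ind {ω | A ω = a} | mG])
    (hπpos : ∀ a ≤ 1, ∀ᵐ ω ∂(μ[|{ω | S ω = 1}]), 0 < π a ω)
    (hepos : ∀ a ≤ 1, ∀ᵐ ω ∂(μ[|{ω | S ω = 1}]), 0 < e a ω)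
    (hexch : ∀ a ≤ 1, CondIndepFun mF hF (Ya a) A (μ[|{ω | S ω = 1}]))
    (hε : ∀ a ω, ε a ω = π a ω / e a ω)
    (hεint : ∀ a ≤ 1, Integrable (ε a) (μ[|{ω | S ω = 1}]))
    (hεYint : ∀ a ≤ 1, Integrable (fun ω => Ya a ω * ε a ω) (μ[|{ω | S ω = 1}]))
    (hεY0int : ∀ a ≤ 1, Integrable (fun ω => Ypo a 0 ω * ε a ω) (μ[|{ω | S ω = 1}]))
    (hwint : ∀ a ≤ 1,
      Integrable (fun ω => ind {ω' | A ω' = a} ω * Y ω / e a ω) (μ[|{ω | S ω = 1}])) :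
    -- with ψ the naive functional, φ₁ and φ₂ the natural average main effects:
    (((∫ ω, ind {ω' | A ω' = 1} ω * Y ω / e 1 ω ∂(μ[|{ω | S ω = 1}]))
        - ∫ ω, ind {ω' | A ω' = 0} ω * Y ω / e 0 ω ∂(μ[|{ω | S ω = 1}]))
      - ∫ ω, (Ya 1 ω - Ya 0 ω) ∂(μ[|{ω | S ω = 2}])
    = (((∫ ω, ind {ω' | A ω' = 1} ω * Y ω / e 1 ω ∂(μ[|{ω | S ω = 1}]))
        - ∫ ω, ind {ω' | A ω' = 0} ω * Y ω / e 0 ω ∂(μ[|{ω | S ω = 1}]))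
      - ∫ ω, (Ya 1 ω - Ya 0 ω) ∂(μ[|{ω | S ω = 1}]))
      + ∑ g ∈ Finset.range (gmax + 1),
          (cov μ (fun ω => Ypo 1 g ω - Ypo 0 g ω) (fun ω => pg 1 g ω - pg 2 g ω)
            + (∫ ω, (Ypo 1 g ω - Ypo 0 g ω) ∂μ)
                * (((μ[|{ω | S ω = 1}]) {ω | G ω = g}).toReal
                    - ((μ[|{ω | S ω = 2}]) {ω | G ω = g}).toReal)))
    ∧ (∫ ω, (Ya 1 ω - Ya 0 ω) ∂(μ[|{ω | S ω = 1}]))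
        - ∫ ω, (Ya 1 ω - Ya 0 ω) ∂(μ[|{ω | S ω = 2}])
      = ∑ g ∈ Finset.range (gmax + 1),
          (cov μ (fun ω => Ypo 1 g ω - Ypo 0 g ω) (fun ω => pg 1 g ω - pg 2 g ω)
            + (∫ ω, (Ypo 1 g ω - Ypo 0 g ω) ∂μ)
                * (((μ[|{ω | S ω = 1}]) {ω | G ω = g}).toReal
                    - ((μ[|{ω | S ω = 2}]) {ω | G ω = g}).toReal)) := by
  classical
  -- basic measurability and positivity facts
  have hMS : ∀ s : ℕ, MeasurableSet[mΩ] {ω | S ω = s} :=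
    fun s => hSmeas (measurableSet_singleton s)
  have hMG : ∀ g : ℕ, MeasurableSet[mΩ] {ω | G ω = g} :=
    fun g => hGmeas (measurableSet_singleton g)
  have hμ0 : ∀ s, (s = 1 ∨ s = 2) → μ {ω | S ω = s} ≠ 0 := fun s hs => (hSpos s hs).ne'
  have hμtop : ∀ s : ℕ, μ {ω | S ω = s} ≠ ∞ := fun s => measure_ne_top μ _
  have hμtR : ∀ s, (s = 1 ∨ s = 2) → (μ {ω | S ω = s}).toReal ≠ 0 :=
    fun s hs => ENNReal.toReal_ne_zero.mpr ⟨hμ0 s hs, hμtop s⟩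
  have hindep : ∀ s : ℕ, ∀ B, MeasurableSet[mH] B →
      μ ({ω | S ω = s} ∩ B) = μ {ω | S ω = s} * μ B := by
    intro s B hB
    rw [Indep_iff] at hSH
    exact hSH _ B ⟨{s}, measurableSet_singleton s, rfl⟩ hB
  haveI hP1 : IsProbabilityMeasure (μ[|{ω | S ω = 1}]) :=
    cond_isProbabilityMeasure (hμ0 1 (Or.inl rfl))
  haveI hP2 : IsProbabilityMeasure (μ[|{ω | S ω = 2}]) :=
    cond_isProbabilityMeasure (hμ0 2 (Or.inr rfl))
  have htransport : ∀ s, (s = 1 ∨ s = 2) → ∀ {f : Ω → ℝ}, StronglyMeasurable[mH] f →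
      ∫ ω, f ω ∂(μ[|{ω | S ω = s}]) = ∫ ω, f ω ∂μ := fun s hs f hf =>
    integral_cond_of_stronglyMeasurable hH (hMS s) (hμ0 s hs) (hμtop s) (hindep s) hf
  have hpgmΩ : ∀ s g, Measurable[mΩ] (pg s g) := fun s g => (hpgmeas s g).mono hH le_rfl
  have hpgm : ∀ s g, AEStronglyMeasurable[mΩ] (pg s g) μ :=
    fun s g => ((hpgmΩ s g).stronglyMeasurable).aestronglyMeasurable
  have hpgb : ∀ s g, ∀ᵐ ω ∂μ, ‖pg s g ω‖ ≤ 1 := fun s g =>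
    (hpgbdd s g).mono fun ω h => by rw [Real.norm_eq_abs, abs_le]; exact ⟨by linarith [h.1], h.2⟩
  have hpgint : ∀ s g, Integrable (pg s g) μ := fun s g =>
    Integrable.mono' (integrable_const (1 : ℝ)) (hpgm s g) (hpgb s g)
  -- L4 : the mean of pg s g under μ is the conditional probability of {G = g}
  have hEpg : ∀ s, (s = 1 ∨ s = 2) → ∀ g,
      ∫ ω, pg s g ω ∂μ = ((μ[|{ω | S ω = s}]) {ω | G ω = g}).toReal := by
    intro s hs g
    haveI : IsProbabilityMeasure (μ[|{ω | S ω = s}]) := cond_isProbabilityMeasure (hμ0 s hs)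
    rw [← htransport s hs (hpgmeas s g).stronglyMeasurable, hpg s g, integral_condExp hH,
      integral_ind (hMG g)]
  -- L3 : condexp of the indicator of {S = s} ∩ {G = g} given mH
  have hpB : ∀ s, (s = 1 ∨ s = 2) → ∀ g : ℕ,
      (fun ω => (μ {ω' | S ω' = s}).toReal * pg s g ω) =ᵐ[μ]
        μ[ind ({ω | S ω = s} ∩ {ω | G ω = g})|mH] := by
    intro s hs g
    haveI : IsProbabilityMeasure (μ[|{ω | S ω = s}]) := cond_isProbabilityMeasure (hμ0 s hs)
    refine ae_eq_condExp_of_forall_setIntegral_eq hH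
      (integrable_ind ((hMS s).inter (hMG g))) (fun C _ _ => ?_) (fun C hC _ => ?_) ?_
    · exact Integrable.restrict (((hpgint s g).const_mul _))
    · have hCm : MeasurableSet[mΩ] C := hH C hC
      rw [setIntegral_ind ((hMS s).inter (hMG g)) C]
      have hCind : StronglyMeasurable[mH] (C.indicator (pg s g)) :=
        ((hpgmeas s g).stronglyMeasurable).indicator hC
      have h4 : ∫ x in C, pg s g x ∂(μ[|{ω | S ω = s}])
          = ∫ x in C, ind {ω | G ω = g} x ∂(μ[|{ω | S ω = s}]) := by
        rw [hpg s g]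
        exact setIntegral_condExp hH (integrable_ind (hMG g)) hC
      rw [integral_cmul (μ.restrict C), setIntegral_eq_integral_indicator μ hCm,
        ← htransport s hs hCind, ← setIntegral_eq_integral_indicator _ hCm, h4,
        setIntegral_ind (hMG g) C, cond_apply (m := mΩ) (hMS s) μ,
        ENNReal.toReal_mul, ENNReal.toReal_inv, ← mul_assoc,
        mul_inv_cancel₀ (hμtR s hs), one_mul, Set.inter_assoc]
    · exact (((hpgmeas s g).const_mul _).stronglyMeasurable).aestronglyMeasurable
  -- key identity
  have keyA : ∀ s, (s = 1 ∨ s = 2) → ∀ g ≤ gmax, ∀ a ≤ 1,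
      ∫ ω, ind {ω' | G ω' = g} ω * Ypo a g ω ∂(μ[|{ω | S ω = s}])
        = ∫ ω, Ypo a g ω * pg s g ω ∂μ := by
    intro s hs g hg a ha
    set B : Set Ω := (fun ω => (S ω, G ω)) ⁻¹' {(s, g)} with hBdef
    have hBeq : B = {ω | S ω = s} ∩ {ω | G ω = g} := by
      ext ω
      simp [hBdef, Prod.ext_iff, Set.mem_inter_iff]
    have hBm : MeasurableSet[mΩ] B := by rw [hBeq]; exact (hMS s).inter (hMG g)
    have hXint : Integrable (Ypo a g) μ := (hYposq a ha g hg).integrable one_le_two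
    have hm₁ : MeasurableSpace.comap (Ypo a g) inferInstance ≤ mΩ := (hYpomeas a ha g hg).comap_le
    have hXm : StronglyMeasurable[MeasurableSpace.comap (Ypo a g) inferInstance] (Ypo a g) :=
      Measurable.stronglyMeasurable (measurable_iff_comap_le.mpr le_rfl)
    have hci := (condIndepFun_iff_condExp_inter_preimage_eq_mul (hYpomeas a ha g hg)
      (hSmeas.prodMk hGmeas)).mp (htrans a ha g hg)
    have hmul : ∀ C : Set Ω, MeasurableSet[MeasurableSpace.comap (Ypo a g) inferInstance] C →
        (μ[ind (C ∩ B)|mH]) =ᵐ[μ] fun ω => (μ[ind C|mH]) ω * (μ[ind B|mH]) ω := by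
      rintro C ⟨s', hs', rfl⟩
      exact hci s' {(s, g)} hs' (measurableSet_singleton _)
    have hkey := integral_mul_ind_eq_integral_mul_condexp hH hm₁ hBm hmul hXint hXm
    have hL : ∫ ω, ind {ω' | G ω' = g} ω * Ypo a g ω ∂(μ[|{ω | S ω = s}])
        = (μ {ω | S ω = s}).toReal⁻¹ * ∫ ω, Ypo a g ω * ind B ω ∂μ := by
      rw [integral_cond]
      congr 1
      rw [setIntegral_eq_integral_indicator μ (hMS s)]
      refine integral_congr_ae (Filter.Eventually.of_forall fun ω => ?_)
      by_cases h1 : S ω = s <;> by_cases h2 : G ω = g <;>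
        simp [Set.indicator, ind, hBeq, Set.mem_inter_iff, Set.mem_setOf_eq, h1, h2]
    have hR : ∫ ω, Ypo a g ω * (μ[ind B|mH]) ω ∂μ
        = (μ {ω | S ω = s}).toReal * ∫ ω, Ypo a g ω * pg s g ω ∂μ := by
      rw [← integral_cmul μ]
      refine integral_congr_ae ?_
      have hae := hpB s hs g
      rw [← hBeq] at hae
      filter_upwards [hae] with ω hω
      rw [← hω]; ring
    rw [hL, hkey, hR, ← mul_assoc, inv_mul_cancel₀ (hμtR s hs), one_mul]
  -- expansion of the natural effects
  have hphi : ∀ s, (s = 1 ∨ s = 2) →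
      ∫ ω, (Ya 1 ω - Ya 0 ω) ∂(μ[|{ω | S ω = s}])
        = ∑ g ∈ Finset.range (gmax + 1), ∫ ω, (Ypo 1 g ω - Ypo 0 g ω) * pg s g ω ∂μ := by
    intro s hs
    have hint : ∀ a ≤ 1, ∀ g ∈ Finset.range (gmax + 1),
        Integrable (fun ω => ind {ω' | G ω' = g} ω * Ypo a g ω) (μ[|{ω | S ω = s}]) := by
      intro a ha g hg
      refine Integrable.bdd_mul (c := 1) (((hYposq a ha g (Nat.lt_succ_iff.mp
        (Finset.mem_range.mp hg))).integrable one_le_two).cond' (hμ0 s hs)) ?_ ?_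
      · exact (ind_stronglyMeasurable (hMG g)).aestronglyMeasurable
      · exact Filter.Eventually.of_forall norm_ind_le_one
    have expand : (fun ω => Ya 1 ω - Ya 0 ω) = fun ω => ∑ g ∈ Finset.range (gmax + 1),
        (ind {ω' | G ω' = g} ω * Ypo 1 g ω - ind {ω' | G ω' = g} ω * Ypo 0 g ω) := by
      funext ω
      rw [hYa 1 ω, hYa 0 ω, ← Finset.sum_sub_distrib]
    rw [expand, integral_finset_sum (Finset.range (gmax + 1))
      (f := fun g ω => ind {ω' | G ω' = g} ω * Ypo 1 g ω - ind {ω' | G ω' = g} ω * Ypo 0 g ω)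
      (fun g hg => ((hint 1 le_rfl g hg).sub (hint 0 (Nat.zero_le 1) g hg)))]
    refine Finset.sum_congr rfl fun g hg => ?_
    have hgle : g ≤ gmax := Nat.lt_succ_iff.mp (Finset.mem_range.mp hg)
    have hs1 : ∫ ω, (ind {ω' | G ω' = g} ω * Ypo 1 g ω - ind {ω' | G ω' = g} ω * Ypo 0 g ω)
        ∂(μ[|{ω | S ω = s}])
        = (∫ ω, ind {ω' | G ω' = g} ω * Ypo 1 g ω ∂(μ[|{ω | S ω = s}]))
          - ∫ ω, ind {ω' | G ω' = g} ω * Ypo 0 g ω ∂(μ[|{ω | S ω = s}]) :=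
      integral_sub (hint 1 le_rfl g hg) (hint 0 (Nat.zero_le 1) g hg)
    have hprod : ∀ a, a ≤ 1 → Integrable (fun ω => Ypo a g ω * pg s g ω) μ := fun a ha =>
      ((hYposq a ha g hgle).integrable one_le_two).mul_bdd (hpgm s g) (hpgb s g)
    rw [hs1, keyA s hs g hgle 1 le_rfl, keyA s hs g hgle 0 (Nat.zero_le 1),
      ← integral_sub (hprod 1 le_rfl) (hprod 0 (Nat.zero_le 1))]
    refine integral_congr_ae (Filter.Eventually.of_forall fun ω => ?_)
    dsimp only; ring
  -- per-term identity
  have hterm : ∀ g ∈ Finset.range (gmax + 1),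
      (cov μ (fun ω => Ypo 1 g ω - Ypo 0 g ω) (fun ω => pg 1 g ω - pg 2 g ω)
        + (∫ ω, (Ypo 1 g ω - Ypo 0 g ω) ∂μ)
            * (((μ[|{ω | S ω = 1}]) {ω | G ω = g}).toReal
                - ((μ[|{ω | S ω = 2}]) {ω | G ω = g}).toReal))
      = (∫ ω, (Ypo 1 g ω - Ypo 0 g ω) * pg 1 g ω ∂μ)
          - ∫ ω, (Ypo 1 g ω - Ypo 0 g ω) * pg 2 g ω ∂μ := by
    intro g hg
    have hgle : g ≤ gmax := Nat.lt_succ_iff.mp (Finset.mem_range.mp hg)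
    have htau : Integrable (fun ω => Ypo 1 g ω - Ypo 0 g ω) μ :=
      ((hYposq 1 le_rfl g hgle).integrable one_le_two).sub
        ((hYposq 0 (Nat.zero_le 1) g hgle).integrable one_le_two)
    have hprod : ∀ s, Integrable (fun ω => (Ypo 1 g ω - Ypo 0 g ω) * pg s g ω) μ := fun s =>
      htau.mul_bdd (hpgm s g) (hpgb s g)
    have hdiff : ∫ ω, (pg 1 g ω - pg 2 g ω) ∂μ
        = ((μ[|{ω | S ω = 1}]) {ω | G ω = g}).toReal
          - ((μ[|{ω | S ω = 2}]) {ω | G ω = g}).toReal := by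
      rw [integral_sub (hpgint 1 g) (hpgint 2 g), hEpg 1 (Or.inl rfl) g, hEpg 2 (Or.inr rfl) g]
    have hsplit : ∫ ω, (Ypo 1 g ω - Ypo 0 g ω) * (pg 1 g ω - pg 2 g ω) ∂μ
        = (∫ ω, (Ypo 1 g ω - Ypo 0 g ω) * pg 1 g ω ∂μ)
          - ∫ ω, (Ypo 1 g ω - Ypo 0 g ω) * pg 2 g ω ∂μ := by
      rw [← integral_sub (hprod 1) (hprod 2)]
      refine integral_congr_ae (Filter.Eventually.of_forall fun ω => ?_)
      dsimp only; ring
    rw [cov, hsplit, hdiff]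
    ring
  -- second conjunct
  have h2 : (∫ ω, (Ya 1 ω - Ya 0 ω) ∂(μ[|{ω | S ω = 1}]))
        - ∫ ω, (Ya 1 ω - Ya 0 ω) ∂(μ[|{ω | S ω = 2}])
      = ∑ g ∈ Finset.range (gmax + 1),
          (cov μ (fun ω => Ypo 1 g ω - Ypo 0 g ω) (fun ω => pg 1 g ω - pg 2 g ω)
            + (∫ ω, (Ypo 1 g ω - Ypo 0 g ω) ∂μ)
                * (((μ[|{ω | S ω = 1}]) {ω | G ω = g}).toReal
                    - ((μ[|{ω | S ω = 2}]) {ω | G ω = g}).toReal)) := by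
    rw [hphi 1 (Or.inl rfl), hphi 2 (Or.inr rfl), ← Finset.sum_sub_distrib]
    exact (Finset.sum_congr rfl fun g hg => (hterm g hg)).symm
  exact ⟨by linarith [h2], h2⟩
end
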